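/- Let W¹(ρ), W²(ρ) be jointly Gaussian random variables with a joint law depending polynomially on a correlation parameter ρ (matrices with covariances Cov(W¹_{ij}, W²_{kl}) proportional to ρ and Cov(W^m_{ij}, W^m_{kl}) independent of ρ as in the GOE-coupled case), and let g be a polynomial function. Define ĝ(ρ) = E[g(W¹(ρ)) g(W²(ρ))]. Then ĝ is a polynomial in ρ all of whose derivatives at ρ = 0 are non-negative; consequently ĝ is convex on [0,1] and satisfies |ĝ(−ρ) − ĝ(0)| ≤ ĝ(ρ) − ĝ(0) ≤ ρ(ĝ(1) − ĝ(0)) for every ρ ∈ [0,1]. -/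

import Mathlib

open MeasureTheory

/-- The standard Gaussian product measure on `ι → ℝ`. -/
noncomputable def stdGaussPi (ι : Type*) [Fintype ι] : Measure (ι → ℝ) :=
  Measure.pi fun _ => ProbabilityTheory.gaussianReal 0 1

/-- A realization of an `N×N` symmetric centered Gaussian Wigner matrix with entry
variances `1 + δ_{i=j}` built from two independent arrays `u, v` of i.i.d. standard
normals: `W_{ij} = √(1+δ_{i=j}) (√(1−|ρ|) u_{ij} + s √|ρ| v_{ij})`, symmetrized.
Taking `s = 1` for the first matrix and `s = sgn(ρ)` for the second, and a common `v`,
one obtains the joint covariance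
`Cov(W^m_{ij}(ρ), W^n_{kl}(ρ)) = δ_{{i,j}={k,l}} (1+δ_{i=j}) (ρ + (1−ρ) δ_{m=n})`. -/
noncomputable def WMat (N : ℕ) (s ρ : ℝ) (u v : Fin N × Fin N → ℝ) :
    Matrix (Fin N) (Fin N) ℝ := fun i j =>
  (if i = j then Real.sqrt 2 else 1) *
    (Real.sqrt (1 - |ρ|) * u (if i ≤ j then (i, j) else (j, i)) +
      s * Real.sqrt |ρ| * v (if i ≤ j then (i, j) else (j, i)))


namespace Stmt14
open MeasureTheory Polynomial Real Filter
noncomputable section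

abbrev gauss : Measure ℝ := ProbabilityTheory.gaussianReal 0 1

lemma gauss_eq : gauss = MeasureTheory.Measure.withDensity volume
    (fun x => ENNReal.ofReal (ProbabilityTheory.gaussianPDFReal 0 1 x)) := by
  exact ProbabilityTheory.gaussianReal_of_var_ne_zero 0 one_ne_zero

lemma pdf_eq (x : ℝ) : ProbabilityTheory.gaussianPDFReal 0 1 x
    = (Real.sqrt (2 * Real.pi))⁻¹ * Real.exp (-x ^ 2 / 2) := by
  simp [ProbabilityTheory.gaussianPDFReal]

lemma integral_gauss (f : ℝ → ℝ) :
    ∫ x, f x ∂gauss = ∫ x, f x * ProbabilityTheory.gaussianPDFReal 0 1 x := by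
  rw [gauss_eq]
  rw [show (fun x => ENNReal.ofReal (ProbabilityTheory.gaussianPDFReal 0 1 x))
      = (fun x => ((ProbabilityTheory.gaussianPDFReal 0 1 x).toNNReal : ENNReal)) from rfl]
  rw [integral_withDensity_eq_integral_smul
    ((ProbabilityTheory.measurable_gaussianPDFReal 0 1).real_toNNReal) f]
  congr 1; funext x
  rw [NNReal.smul_def, Real.coe_toNNReal _ (ProbabilityTheory.gaussianPDFReal_nonneg 0 1 x),
    smul_eq_mul, mul_comm]

lemma integrable_gauss_iff {f : ℝ → ℝ} (hm : Measurable f) :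
    Integrable f gauss ↔ Integrable (fun x => f x * ProbabilityTheory.gaussianPDFReal 0 1 x) := by
  rw [gauss_eq, integrable_withDensity_iff ((ProbabilityTheory.measurable_gaussianPDFReal 0 1).ennreal_ofReal) (by
    filter_upwards with x; exact ENNReal.ofReal_lt_top)]
  constructor <;> intro h <;> refine h.congr (by
    filter_upwards with x
    rw [ENNReal.toReal_ofReal (ProbabilityTheory.gaussianPDFReal_nonneg 0 1 x)])

lemma integrable_pow_mul_gaussian (n : ℕ) :
    Integrable (fun x : ℝ => x ^ n * Real.exp (-x ^ 2 / 2)) := by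
  have key : ∀ x : ℝ, ‖x ^ n * Real.exp (-x ^ 2 / 2)‖
      ≤ (Nat.factorial n : ℝ) * Real.exp 1 * Real.exp (-(1/4) * x ^ 2) := by
    intro x
    rw [norm_mul, norm_pow, Real.norm_eq_abs, Real.norm_eq_abs, abs_of_pos (Real.exp_pos _)]
    have hb : |x| ^ n ≤ (Nat.factorial n : ℝ) * Real.exp |x| := by
      have h := Real.pow_div_factorial_le_exp (x := |x|) (abs_nonneg x) n
      rw [div_le_iff₀ (by positivity)] at h
      linarith
    calc |x| ^ n * Real.exp (-x ^ 2 / 2)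
        ≤ (Nat.factorial n : ℝ) * Real.exp |x| * Real.exp (-x ^ 2 / 2) := by
          exact mul_le_mul_of_nonneg_right hb (Real.exp_pos _).le
      _ = (Nat.factorial n : ℝ) * Real.exp (|x| + -x ^ 2 / 2) := by rw [mul_assoc, ← Real.exp_add]
      _ ≤ (Nat.factorial n : ℝ) * Real.exp (1 + -(1/4) * x ^ 2) := by
          have : |x| + -x ^ 2 / 2 ≤ 1 + -(1/4) * x ^ 2 := by
            nlinarith [sq_nonneg (|x| - 2), sq_abs x]
          exact mul_le_mul_of_nonneg_left (Real.exp_le_exp.2 this) (by positivity)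
      _ = (Nat.factorial n : ℝ) * Real.exp 1 * Real.exp (-(1/4) * x ^ 2) := by
          rw [Real.exp_add]; ring
  exact Integrable.mono'
    (((integrable_exp_neg_mul_sq (by norm_num : (0:ℝ) < 1/4)).const_mul _))
    (Continuous.aestronglyMeasurable (by continuity)) (Filter.Eventually.of_forall key)

lemma integrable_poly_mul_gaussian (p : Polynomial ℝ) :
    Integrable (fun x : ℝ => p.eval x * Real.exp (-x ^ 2 / 2)) := by
  have : (fun x : ℝ => p.eval x * Real.exp (-x ^ 2 / 2))
      = fun x : ℝ => ∑ i ∈ Finset.range (p.natDegree + 1),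
          p.coeff i * (x ^ i * Real.exp (-x ^ 2 / 2)) := by
    funext x
    rw [eval_eq_sum_range, Finset.sum_mul]
    congr 1; funext i; ring
  rw [this]
  exact integrable_finset_sum _ fun i _ => (integrable_pow_mul_gaussian i).const_mul _

lemma integrable_poly_gauss (p : Polynomial ℝ) : Integrable (fun x => p.eval x) gauss := by
  rw [integrable_gauss_iff (by fun_prop)]
  have : (fun x => p.eval x * ProbabilityTheory.gaussianPDFReal 0 1 x)
      = fun x => (Real.sqrt (2 * Real.pi))⁻¹ * (p.eval x * Real.exp (-x ^ 2 / 2)) := by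
    funext x; rw [pdf_eq]; ring
  rw [this]
  exact (integrable_poly_mul_gaussian p).const_mul _

lemma tendsto_poly_gaussian (p : Polynomial ℝ) :
    Tendsto (fun x : ℝ => p.eval x * Real.exp (-x ^ 2 / 2)) (cocompact ℝ) (nhds 0) := by
  have hbd : ∀ x : ℝ, ‖p.eval x * Real.exp (-x ^ 2 / 2)‖
      ≤ ∑ i ∈ Finset.range (p.natDegree + 1), |p.coeff i| * (|x| ^ i * Real.exp (-(1/2) * x ^ 2)) := by
    intro x
    rw [norm_mul, Real.norm_eq_abs, Real.norm_eq_abs, abs_of_pos (Real.exp_pos _)]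
    have h1 : |p.eval x| ≤ ∑ i ∈ Finset.range (p.natDegree + 1), |p.coeff i| * |x| ^ i := by
      rw [eval_eq_sum_range]
      refine (Finset.abs_sum_le_sum_abs _ _).trans ?_
      refine Finset.sum_le_sum fun i _ => ?_
      rw [abs_mul, abs_pow]
    calc |p.eval x| * Real.exp (-x ^ 2 / 2)
        ≤ (∑ i ∈ Finset.range (p.natDegree + 1), |p.coeff i| * |x| ^ i) * Real.exp (-x ^ 2 / 2) :=
          mul_le_mul_of_nonneg_right h1 (Real.exp_pos _).le
      _ = ∑ i ∈ Finset.range (p.natDegree + 1), |p.coeff i| * (|x| ^ i * Real.exp (-(1/2) * x ^ 2)) := by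
          rw [Finset.sum_mul]
          congr 1; funext i
          rw [show -x^2/2 = -(1/2) * x^2 by ring]; ring
  have hlim : Tendsto (fun x : ℝ => ∑ i ∈ Finset.range (p.natDegree + 1),
      |p.coeff i| * (|x| ^ i * Real.exp (-(1/2) * x ^ 2))) (cocompact ℝ) (nhds 0) := by
    have : Tendsto (fun x : ℝ => ∑ i ∈ Finset.range (p.natDegree + 1),
        |p.coeff i| * (|x| ^ i * Real.exp (-(1/2) * x ^ 2))) (cocompact ℝ)
        (nhds (∑ i ∈ Finset.range (p.natDegree + 1), |p.coeff i| * 0)) := by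
      refine tendsto_finset_sum _ fun i _ => ?_
      refine Tendsto.const_mul _ ?_
      have h := tendsto_rpow_abs_mul_exp_neg_mul_sq_cocompact (by norm_num : (0:ℝ) < 1/2) i
      refine h.congr fun x => ?_
      rw [Real.rpow_natCast]
    simpa using this
  exact squeeze_zero_norm hbd hlim

lemma stein (p : Polynomial ℝ) :
    ∫ x, x * p.eval x ∂gauss = ∫ x, (derivative p).eval x ∂gauss := by
  set F : ℝ → ℝ := fun x => p.eval x * Real.exp (-x ^ 2 / 2) with hF
  set D : ℝ → ℝ := fun x => ((derivative p).eval x - x * p.eval x) * Real.exp (-x ^ 2 / 2) with hDdef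
  have hderiv : ∀ x : ℝ, HasDerivAt F (D x) x := by
    intro x
    have h1 : HasDerivAt (fun y : ℝ => p.eval y) ((derivative p).eval x) x := p.hasDerivAt x
    have h2 : HasDerivAt (fun y : ℝ => -y ^ 2 / 2) (-x) x := by
      have := (hasDerivAt_pow 2 x).neg.div_const 2
      simpa using this.congr_deriv (by ring)
    have h3 := h2.exp
    have h4 := h1.mul h3
    refine h4.congr_deriv ?_
    simp only [hDdef]; ring
  have hD : Integrable D := by
    have := integrable_poly_mul_gaussian (derivative p - X * p)
    refine this.congr (Filter.Eventually.of_forall fun x => ?_)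
    simp [hDdef]
  have htop : Tendsto F atTop (nhds 0) := by
    refine (tendsto_poly_gaussian p).mono_left ?_
    rw [cocompact_eq_atBot_atTop]; exact le_sup_right
  have hbot : Tendsto F atBot (nhds 0) := by
    refine (tendsto_poly_gaussian p).mono_left ?_
    rw [cocompact_eq_atBot_atTop]; exact le_sup_left
  have h1 : ∫ x in Set.Ioi (0:ℝ), D x = 0 - F 0 :=
    integral_Ioi_of_hasDerivAt_of_tendsto (hderiv 0).continuousAt.continuousWithinAt
      (fun x _ => hderiv x) hD.integrableOn htop
  have h2 : ∫ x in Set.Iic (0:ℝ), D x = F 0 - 0 :=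
    integral_Iic_of_hasDerivAt_of_tendsto (hderiv 0).continuousAt.continuousWithinAt
      (fun x _ => hderiv x) hD.integrableOn hbot
  have h3 : ∫ x, D x = 0 := by
    rw [← integral_add_compl measurableSet_Iic hD, Set.compl_Iic, h1, h2]; ring
  have e1 : Integrable (fun x => (derivative p).eval x * Real.exp (-x ^ 2 / 2)) :=
    integrable_poly_mul_gaussian _
  have e2 : Integrable (fun x => x * p.eval x * Real.exp (-x ^ 2 / 2)) := by
    have := integrable_poly_mul_gaussian (X * p)
    refine this.congr (Filter.Eventually.of_forall fun x => ?_); simp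
  have h4 : (∫ x, (derivative p).eval x * Real.exp (-x ^ 2 / 2))
      - ∫ x, x * p.eval x * Real.exp (-x ^ 2 / 2) = 0 := by
    rw [← integral_sub e1 e2]
    rw [← h3]
    congr 1; funext x; simp only [hDdef]; ring
  rw [integral_gauss, integral_gauss]
  have heq : ∀ q : Polynomial ℝ, ∀ x : ℝ, q.eval x * ProbabilityTheory.gaussianPDFReal 0 1 x
      = (Real.sqrt (2 * Real.pi))⁻¹ * (q.eval x * Real.exp (-x ^ 2 / 2)) := by
    intro q x; rw [pdf_eq]; ring
  calc ∫ x, x * p.eval x * ProbabilityTheory.gaussianPDFReal 0 1 x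
      = ∫ x, (Real.sqrt (2 * Real.pi))⁻¹ * (x * p.eval x * Real.exp (-x ^ 2 / 2)) := by
        congr 1; funext x; rw [pdf_eq]; ring
    _ = (Real.sqrt (2 * Real.pi))⁻¹ * ∫ x, x * p.eval x * Real.exp (-x ^ 2 / 2) := by
        rw [integral_const_mul]
    _ = (Real.sqrt (2 * Real.pi))⁻¹ * ∫ x, (derivative p).eval x * Real.exp (-x ^ 2 / 2) := by
        rw [show (∫ x, x * p.eval x * Real.exp (-x ^ 2 / 2))
          = ∫ x, (derivative p).eval x * Real.exp (-x ^ 2 / 2) by linarith]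
    _ = ∫ x, (derivative p).eval x * ProbabilityTheory.gaussianPDFReal 0 1 x := by
        rw [← integral_const_mul]
        congr 1; funext x; rw [heq]


def He (n : ℕ) : Polynomial ℝ := (Polynomial.hermite n).map (Int.castRingHom ℝ)

lemma He_zero : He 0 = 1 := by simp [He, Polynomial.hermite_zero]
lemma He_one : He 1 = X := by simp [He, Polynomial.hermite_one]

lemma He_succ (n : ℕ) : He (n + 1) = X * He n - derivative (He n) := by
  unfold He
  rw [Polynomial.hermite_succ, Polynomial.map_sub, Polynomial.map_mul, Polynomial.map_X,
    Polynomial.derivative_map]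

lemma derivative_He_succ (n : ℕ) :
    derivative (He (n + 1)) = ((n : ℝ) + 1) • He n := by
  induction n with
  | zero => simp [He_one, He_zero]
  | succ n ih =>
    rw [He_succ (n + 1), derivative_sub, derivative_mul, derivative_X, one_mul, ih,
      derivative_smul, mul_smul_comm, add_sub_assoc, ← smul_sub, ← He_succ n]
    push_cast
    module

lemma derivative_He (n : ℕ) : derivative (He n) = (n : ℝ) • He (n - 1) := by
  cases n with
  | zero => simp [He_zero]
  | succ n => rw [derivative_He_succ]; push_cast; simp

lemma integral_He (n : ℕ) : ∫ x, (He n).eval x ∂gauss = if n = 0 then 1 else 0 := by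
  induction n with
  | zero => simp [He_zero]
  | succ n ih =>
    have h1 : (fun x : ℝ => (He (n+1)).eval x)
        = fun x => x * (He n).eval x - (derivative (He n)).eval x := by
      funext x; rw [He_succ]; simp
    rw [h1, integral_sub ?_ (integrable_poly_gauss _)]
    · rw [stein]; simp
    · have := integrable_poly_gauss (X * He n)
      refine this.congr (Filter.Eventually.of_forall fun x => ?_); simp

lemma integral_He_affine (n : ℕ) (c d : ℝ) (h : c ^ 2 + d ^ 2 = 1) (v : ℝ) :
    ∫ u, (He n).eval (c * u + d * v) ∂gauss = d ^ n * (He n).eval v := by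
  induction n using Nat.strong_induction_on with
  | _ n ih =>
  match n with
  | 0 => simp [He_zero]
  | (n+1) =>
    have comp_eval : ∀ (q : Polynomial ℝ) (u : ℝ),
        (q.comp (C c * X + C (d * v))).eval u = q.eval (c * u + d * v) := by
      intro q u; simp [eval_comp]
    have int_comp : ∀ q : Polynomial ℝ, Integrable (fun u => q.eval (c * u + d * v)) gauss := by
      intro q
      refine (integrable_poly_gauss (q.comp (C c * X + C (d * v)))).congr
        (Filter.Eventually.of_forall fun u => ?_)
      simpa using comp_eval q u
    -- ∫ u * Heₙ(cu+dv) = c * ∫ Heₙ'(cu+dv)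
    have hu : ∫ u, u * (He n).eval (c * u + d * v) ∂gauss
        = c * ∫ u, (derivative (He n)).eval (c * u + d * v) ∂gauss := by
      have := stein ((He n).comp (C c * X + C (d * v)))
      have hder : derivative ((He n).comp (C c * X + C (d * v)))
          = C c * (derivative (He n)).comp (C c * X + C (d * v)) := by
        rw [Polynomial.derivative_comp]
        congr 1
        simp
      calc ∫ u, u * (He n).eval (c * u + d * v) ∂gauss
          = ∫ u, u * ((He n).comp (C c * X + C (d * v))).eval u ∂gauss := by
            congr 1; funext u; rw [comp_eval]
        _ = ∫ u, (derivative ((He n).comp (C c * X + C (d * v)))).eval u ∂gauss := stein _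
        _ = ∫ u, c * (derivative (He n)).eval (c * u + d * v) ∂gauss := by
            congr 1; funext u; rw [hder]; simp [comp_eval]
        _ = c * ∫ u, (derivative (He n)).eval (c * u + d * v) ∂gauss := integral_const_mul _ _
    -- ∫ Heₙ'(cu+dv) = n * d^(n-1) * He_{n-1}(v)
    have hder_int : ∫ u, (derivative (He n)).eval (c * u + d * v) ∂gauss
        = (n : ℝ) * (d ^ (n - 1) * (He (n - 1)).eval v) := by
      rw [derivative_He]
      have : ∀ u : ℝ, (((n : ℝ) • He (n-1)).eval (c * u + d * v))
          = (n : ℝ) * (He (n-1)).eval (c * u + d * v) := by intro u; simp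
      calc ∫ u, (((n:ℝ) • He (n-1)).eval (c * u + d * v)) ∂gauss
          = ∫ u, (n : ℝ) * (He (n-1)).eval (c * u + d * v) ∂gauss := by
            congr 1; funext u; rw [this]
        _ = (n : ℝ) * ∫ u, (He (n-1)).eval (c * u + d * v) ∂gauss := integral_const_mul _ _
        _ = (n : ℝ) * (d ^ (n-1) * (He (n-1)).eval v) := by
            rw [ih (n-1) (by omega)]
    have expand : ∀ u : ℝ, (He (n+1)).eval (c * u + d * v)
        = c * (u * (He n).eval (c * u + d * v)) + d * v * (He n).eval (c * u + d * v)
          - (derivative (He n)).eval (c * u + d * v) := by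
      intro u; rw [He_succ]; simp; ring
    have i1 : Integrable (fun u => u * (He n).eval (c * u + d * v)) gauss := by
      refine (integrable_poly_gauss (X * (He n).comp (C c * X + C (d * v)))).congr
        (Filter.Eventually.of_forall fun u => ?_)
      simp [comp_eval]
    calc ∫ u, (He (n+1)).eval (c * u + d * v) ∂gauss
        = ∫ u, (c * (u * (He n).eval (c * u + d * v)) + d * v * (He n).eval (c * u + d * v)
            - (derivative (He n)).eval (c * u + d * v)) ∂gauss := by
          congr 1; funext u; rw [expand]
      _ = (∫ u, c * (u * (He n).eval (c * u + d * v)) ∂gauss)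
          + (∫ u, d * v * (He n).eval (c * u + d * v) ∂gauss)
          - ∫ u, (derivative (He n)).eval (c * u + d * v) ∂gauss := by
          rw [integral_sub (by exact (i1.const_mul c).add ((int_comp (He n)).const_mul (d*v)))
            (int_comp _), integral_add (i1.const_mul c) ((int_comp (He n)).const_mul (d*v))]
      _ = c * (c * ((n : ℝ) * (d ^ (n - 1) * (He (n - 1)).eval v)))
          + d * v * (d ^ n * (He n).eval v)
          - (n : ℝ) * (d ^ (n - 1) * (He (n - 1)).eval v) := by
          rw [integral_const_mul, integral_const_mul, hu, hder_int, ih n (by omega)]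
      _ = d ^ (n+1) * (He (n+1)).eval v := by
          have hev : (He (n+1)).eval v = v * (He n).eval v - (n : ℝ) * (He (n-1)).eval v := by
            rw [He_succ]; simp [derivative_He]
          rw [hev]
          have hc2 : c ^ 2 = 1 - d ^ 2 := by linarith
          cases n with
          | zero =>
            simp [He_zero]
            try ring
          | succ m =>
            simp only [Nat.add_sub_cancel]
            push_cast
            linear_combination (((m : ℝ) + 1) * d ^ m * eval v (He m)) * h
  -- fallback?

lemma integral_He_mul (m n : ℕ) :
    ∫ x, (He m).eval x * (He n).eval x ∂gauss
      = if m = n then (Nat.factorial m : ℝ) else 0 := by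
  induction m generalizing n with
  | zero =>
    have : (fun x : ℝ => (He 0).eval x * (He n).eval x) = fun x => (He n).eval x := by
      funext x; simp [He_zero]
    rw [this, integral_He]
    by_cases h : n = 0
    · subst h; simp
    · rw [if_neg h, if_neg (by omega : ¬(0:ℕ) = n)]
  | succ m ih =>
    have i_mul : ∀ p q : Polynomial ℝ, Integrable (fun x => p.eval x * q.eval x) gauss := by
      intro p q
      refine (integrable_poly_gauss (p * q)).congr (Filter.Eventually.of_forall fun x => ?_)
      simp
    have i_xmul : Integrable (fun x => x * ((He m).eval x * (He n).eval x)) gauss := by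
      refine (integrable_poly_gauss (X * (He m * He n))).congr
        (Filter.Eventually.of_forall fun x => ?_)
      simp
      try ring
    have expand : ∀ x : ℝ, (He (m+1)).eval x * (He n).eval x
        = x * ((He m).eval x * (He n).eval x) - (derivative (He m)).eval x * (He n).eval x := by
      intro x; rw [He_succ]; simp; ring
    have hsp := stein (He m * He n)
    have hsp' : ∫ x, x * ((He m).eval x * (He n).eval x) ∂gauss
        = (∫ x, (derivative (He m)).eval x * (He n).eval x ∂gauss)
          + ∫ x, (He m).eval x * (derivative (He n)).eval x ∂gauss := by
      calc ∫ x, x * ((He m).eval x * (He n).eval x) ∂gauss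
          = ∫ x, x * (He m * He n).eval x ∂gauss := by congr 1; funext x; simp
        _ = ∫ x, (derivative (He m * He n)).eval x ∂gauss := stein _
        _ = ∫ x, ((derivative (He m)).eval x * (He n).eval x
              + (He m).eval x * (derivative (He n)).eval x) ∂gauss := by
            congr 1; funext x; rw [derivative_mul]; simp
        _ = _ := by
          rw [integral_add]
          · refine (integrable_poly_gauss (derivative (He m) * He n)).congr
              (Filter.Eventually.of_forall fun x => ?_); simp
          · refine (integrable_poly_gauss (He m * derivative (He n))).congr
              (Filter.Eventually.of_forall fun x => ?_); simp
    calc ∫ x, (He (m+1)).eval x * (He n).eval x ∂gauss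
        = ∫ x, (x * ((He m).eval x * (He n).eval x)
            - (derivative (He m)).eval x * (He n).eval x) ∂gauss := by
          congr 1; funext x; rw [expand]
      _ = (∫ x, x * ((He m).eval x * (He n).eval x) ∂gauss)
          - ∫ x, (derivative (He m)).eval x * (He n).eval x ∂gauss := by
          rw [integral_sub i_xmul]
          refine (integrable_poly_gauss (derivative (He m) * He n)).congr
            (Filter.Eventually.of_forall fun x => ?_); simp
      _ = ∫ x, (He m).eval x * (derivative (He n)).eval x ∂gauss := by rw [hsp']; ring
      _ = (n : ℝ) * ∫ x, (He m).eval x * (He (n-1)).eval x ∂gauss := by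
          rw [← integral_const_mul]
          congr 1; funext x; rw [derivative_He]; simp; ring
      _ = (n : ℝ) * (if m = n - 1 then (Nat.factorial m : ℝ) else 0) := by rw [ih]
      _ = if m + 1 = n then (Nat.factorial (m+1) : ℝ) else 0 := by
          cases n with
          | zero => simp
          | succ k =>
            simp only [Nat.add_sub_cancel]
            by_cases h : m = k
            · subst h
              simp [Nat.factorial_succ]
              try push_cast
              try ring
            · have : ¬ (m + 1 = k + 1) := by omega
              simp [h, this]


section PiTools

variable {E : Type*} [MeasurableSpace E] (μ : Measure E) [IsProbabilityMeasure μ]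

lemma integrable_pi_prod_fin : ∀ {n : ℕ} (f : Fin n → E → ℝ), (∀ i, Integrable (f i) μ) →
    Integrable (fun x : Fin n → E => ∏ i, f i (x i)) (Measure.pi fun _ => μ) := by
  intro n
  induction n with
  | zero => intro f _; simpa using integrable_const (μ := Measure.pi (fun _ : Fin 0 => μ)) (1 : ℝ)
  | succ n ih =>
    intro f hf
    have h := ((measurePreserving_piFinSuccAbove (fun _ : Fin (n+1) => μ) 0).symm)
    rw [← h.integrable_comp_emb (MeasurableEquiv.measurableEmbedding _)]
    simp_rw [MeasurableEquiv.piFinSuccAbove_symm_apply, Fin.insertNthEquiv,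
      Fin.prod_univ_succ, Fin.insertNth_zero]
    simp only [Fin.zero_succAbove, Function.comp_def, Fin.cons_zero, Fin.cons_succ, cast_eq,
      Equiv.coe_fn_mk]
    exact Integrable.mul_prod (hf 0) (ih (fun i => f i.succ) (fun i => hf _))

lemma integral_pi_prod_fin : ∀ {n : ℕ} (f : Fin n → E → ℝ),
    ∫ x : Fin n → E, ∏ i, f i (x i) ∂(Measure.pi fun _ => μ) = ∏ i, ∫ x, f i x ∂μ := by
  intro n
  induction n with
  | zero => intro f; simp
  | succ n ih =>
    intro f
    calc ∫ x : Fin (n+1) → E, ∏ i, f i (x i) ∂(Measure.pi fun _ => μ)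
        = ∫ p : E × (Fin n → E), f 0 p.1 * ∏ i : Fin n, f (Fin.succ i) (p.2 i)
            ∂(μ.prod (Measure.pi fun _ => μ)) := by
          rw [← ((measurePreserving_piFinSuccAbove (fun _ : Fin (n+1) => μ) 0).symm).integral_comp']
          simp only [MeasurableEquiv.piFinSuccAbove_symm_apply, Fin.insertNthEquiv,
            Fin.prod_univ_succ, Fin.insertNth_zero, Equiv.coe_fn_mk, Fin.cons_succ,
            Fin.zero_succAbove, cast_eq, Fin.cons_zero]
      _ = (∫ x, f 0 x ∂μ) * ∏ i : Fin n, ∫ x, f (Fin.succ i) x ∂μ := by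
          rw [← ih (fun i => f (Fin.succ i)), ← integral_prod_mul]
      _ = ∏ i, ∫ x, f i x ∂μ := by rw [Fin.prod_univ_succ]

lemma integral_pi_prod {ι : Type*} [Fintype ι] (f : ι → E → ℝ) :
    ∫ x : ι → E, ∏ i, f i (x i) ∂(Measure.pi fun _ => μ) = ∏ i, ∫ x, f i x ∂μ := by
  let e := (Fintype.equivFin ι).symm
  rw [← (measurePreserving_piCongrLeft (fun _ : ι => μ) e).integral_comp']
  simp_rw [← e.prod_comp, MeasurableEquiv.coe_piCongrLeft, Equiv.piCongrLeft_apply_apply]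
  exact integral_pi_prod_fin μ _

lemma integrable_pi_prod {ι : Type*} [Fintype ι] (f : ι → E → ℝ)
    (hf : ∀ i, Integrable (f i) μ) :
    Integrable (fun x : ι → E => ∏ i, f i (x i)) (Measure.pi fun _ => μ) := by
  let e := (Fintype.equivFin ι).symm
  rw [← (measurePreserving_piCongrLeft (fun _ : ι => μ) e).integrable_comp_emb
    (MeasurableEquiv.measurableEmbedding _)]
  have : ((fun x : ι → E => ∏ i, f i (x i)) ∘ (MeasurableEquiv.piCongrLeft (fun _ => E) e))
      = fun x : Fin (Fintype.card ι) → E => ∏ j, f (e j) (x j) := by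
    funext x
    simp only [Function.comp_apply, MeasurableEquiv.coe_piCongrLeft,
      Equiv.piCongrLeft_apply_apply, ← e.prod_comp]
  rw [this]
  exact integrable_pi_prod_fin μ _ (fun i => hf _)

lemma integral_fin3 (f : E → E → E → ℝ)
    (hint : Integrable (fun x : Fin 3 → E => f (x 0) (x 1) (x 2)) (Measure.pi fun _ => μ)) :
    ∫ x : Fin 3 → E, f (x 0) (x 1) (x 2) ∂(Measure.pi fun _ => μ)
      = ∫ v, ∫ w : Fin 2 → E, f (w 0) (w 1) v ∂(Measure.pi fun _ => μ) ∂μ := by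
  have h := measurePreserving_piFinSuccAbove (fun _ : Fin 3 => μ) 2
  have hfe : (fun x : Fin 3 → E => f (x 0) (x 1) (x 2))
      = fun x : Fin 3 → E => (fun p : E × (Fin 2 → E) => f (p.2 0) (p.2 1) p.1)
        ((MeasurableEquiv.piFinSuccAbove (fun _ => E) 2) x) := by
    funext x
    have e0 : (2 : Fin 3).succAbove 0 = 0 := by decide
    have e1 : (2 : Fin 3).succAbove 1 = 1 := by decide
    simp [MeasurableEquiv.piFinSuccAbove, Fin.insertNthEquiv, Fin.removeNth, e0, e1]
  have hint' : Integrable (fun p : E × (Fin 2 → E) => f (p.2 0) (p.2 1) p.1)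
      (μ.prod (Measure.pi fun _ : Fin 2 => μ)) := by
    refine (h.integrable_comp_emb (MeasurableEquiv.measurableEmbedding _)).1 ?_
    have hcmp : ((fun p : E × (Fin 2 → E) => f (p.2 0) (p.2 1) p.1)
        ∘ (MeasurableEquiv.piFinSuccAbove (fun _ => E) 2))
        = fun x : Fin 3 → E => f (x 0) (x 1) (x 2) := by
      funext x
      rw [Function.comp_apply]
      exact (congrFun hfe x).symm
    rw [hcmp]
    exact hint
  calc ∫ x : Fin 3 → E, f (x 0) (x 1) (x 2) ∂(Measure.pi fun _ => μ)
      = ∫ p : E × (Fin 2 → E), f (p.2 0) (p.2 1) p.1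
          ∂(μ.prod (Measure.pi fun _ : Fin 2 => μ)) := by
        rw [hfe]
        exact h.integral_comp' (fun p : E × (Fin 2 → E) => f (p.2 0) (p.2 1) p.1)
    _ = ∫ v, ∫ w : Fin 2 → E, f (w 0) (w 1) v ∂(Measure.pi fun _ => μ) ∂μ :=
        integral_prod _ hint'

end PiTools

lemma integrable_eval_nested {ι κ : Type*} [Fintype ι] [Fintype κ]
    (P : MvPolynomial (ι × κ) ℝ) :
    Integrable (fun x : ι → κ → ℝ => MvPolynomial.eval (fun c => x c.1 c.2) P)
      (Measure.pi fun _ => Measure.pi fun _ => gauss) := by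
  have key : (fun x : ι → κ → ℝ => MvPolynomial.eval (fun c => x c.1 c.2) P)
      = fun x => ∑ d ∈ P.support, (MvPolynomial.coeff d P) *
          ∏ i : ι, ∏ q : κ, (x i q) ^ (d (i, q)) := by
    funext x
    conv_lhs => rw [P.as_sum]
    rw [map_sum]
    refine Finset.sum_congr rfl fun d _ => ?_
    rw [MvPolynomial.eval_monomial]
    congr 1
    rw [Finsupp.prod_fintype _ _ (fun c => pow_zero _), Fintype.prod_prod_type]
  rw [key]
  refine integrable_finset_sum _ fun d _ => Integrable.const_mul ?_ _
  exact integrable_pi_prod _ (fun i (y : κ → ℝ) => ∏ q : κ, y q ^ d (i, q))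
    (fun i => integrable_pi_prod _ (fun q (t : ℝ) => t ^ d (i, q))
      (fun q => (integrable_poly_gauss (X ^ d (i, q))).congr (Filter.Eventually.of_forall fun t => by simp)))


lemma coeff_He_self (n : ℕ) : (He n).coeff n = 1 := by
  simp [He, Polynomial.coeff_map, Polynomial.coeff_hermite_self]

lemma coeff_He_of_lt {n k : ℕ} (h : n < k) : (He n).coeff k = 0 := by
  simp [He, Polynomial.coeff_map, Polynomial.coeff_hermite_of_lt h]

lemma span_He (p : Polynomial ℝ) : p ∈ Submodule.span ℝ (Set.range He) := by
  suffices h : ∀ n : ℕ, ∀ p : Polynomial ℝ, p.natDegree ≤ n →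
      p ∈ Submodule.span ℝ (Set.range He) from h p.natDegree p le_rfl
  intro n
  induction n with
  | zero =>
    intro p hp
    rw [Polynomial.eq_C_of_natDegree_le_zero hp]
    have h1 : C (p.coeff 0) = (p.coeff 0) • He 0 := by
      rw [He_zero, Polynomial.smul_eq_C_mul, mul_one]
    rw [h1]
    exact Submodule.smul_mem _ _ (Submodule.subset_span ⟨0, rfl⟩)
  | succ n ih =>
    intro p hp
    have hdeg : (p - C (p.coeff (n+1)) * He (n+1)).natDegree ≤ n := by
      refine Polynomial.natDegree_le_iff_coeff_eq_zero.2 fun m hm => ?_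
      rw [Polynomial.coeff_sub, Polynomial.coeff_C_mul]
      rcases Nat.lt_or_ge (n+1) m with h | h
      · rw [Polynomial.coeff_eq_zero_of_natDegree_lt (lt_of_le_of_lt hp h),
          coeff_He_of_lt h, mul_zero, sub_zero]
      · have hm2 : m = n + 1 := le_antisymm h hm
        subst hm2
        rw [coeff_He_self, mul_one, sub_self]
    have key : p = (p - C (p.coeff (n+1)) * He (n+1)) + C (p.coeff (n+1)) * He (n+1) :=
      (sub_add_cancel _ _).symm
    rw [key]
    refine Submodule.add_mem _ (ih _ hdeg) ?_
    have h2 : C (p.coeff (n+1)) * He (n+1) = (p.coeff (n+1)) • He (n+1) :=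
      (Polynomial.smul_eq_C_mul _).symm
    rw [h2]
    exact Submodule.smul_mem _ _ (Submodule.subset_span ⟨n+1, rfl⟩)

variable {κ : Type*} [Fintype κ] [DecidableEq κ]

def HFamOn (s : Finset κ) (e : κ → ℕ) : MvPolynomial κ ℝ :=
  ∏ q ∈ s, Polynomial.aeval (MvPolynomial.X q) (He (e q))

lemma mem_span_HFamOn (s : Finset κ) (d : κ → ℕ) :
    (∏ q ∈ s, (MvPolynomial.X q : MvPolynomial κ ℝ) ^ d q)
      ∈ Submodule.span ℝ (Set.range (HFamOn s)) := by
  induction s using Finset.induction_on with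
  | empty =>
    rw [Finset.prod_empty,
      show (1 : MvPolynomial κ ℝ) = HFamOn ∅ (fun _ => 0) by simp [HFamOn]]
    exact Submodule.subset_span ⟨_, rfl⟩
  | insert _ _ ha =>
    rename_i a s ih0  -- get names
    rw [Finset.prod_insert ha]
    have h1 : (MvPolynomial.X a : MvPolynomial κ ℝ) ^ d a
        ∈ Submodule.span ℝ
          (Set.range fun m : ℕ => Polynomial.aeval (MvPolynomial.X a) (He m)) := by
      have hx : (Polynomial.X : Polynomial ℝ) ^ d a ∈ Submodule.span ℝ (Set.range He) :=
        span_He _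
      have h2 := Submodule.mem_map_of_mem
        (f := (Polynomial.aeval (MvPolynomial.X a) :
          Polynomial ℝ →ₐ[ℝ] MvPolynomial κ ℝ).toLinearMap) hx
      rw [Submodule.map_span, ← Set.range_comp] at h2
      simpa [Function.comp_def] using h2
    have key : ∀ x ∈ Submodule.span ℝ
          (Set.range fun m : ℕ => Polynomial.aeval (MvPolynomial.X a) (He m)),
        ∀ y ∈ Submodule.span ℝ (Set.range (HFamOn s)),
          x * y ∈ Submodule.span ℝ (Set.range (HFamOn (insert a s))) := by
      intro x hx
      induction hx using Submodule.span_induction with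
      | mem x hxm =>
        intro y hy
        induction hy using Submodule.span_induction with
        | mem y hym =>
          obtain ⟨m, rfl⟩ := hxm
          obtain ⟨e, rfl⟩ := hym
          have : Polynomial.aeval (MvPolynomial.X a) (He m) * HFamOn s e
              = HFamOn (insert a s) (Function.update e a m) := by
            simp only [HFamOn]
            rw [Finset.prod_insert ha, Function.update_self]
            congr 1
            refine Finset.prod_congr rfl fun q hq => ?_
            have hqa : q ≠ a := fun hqa => ha (hqa ▸ hq)
            rw [Function.update_of_ne hqa m e]
          rw [this]
          exact Submodule.subset_span ⟨_, rfl⟩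
        | zero => rw [mul_zero]; exact Submodule.zero_mem _
        | add y z _ _ hy hz => rw [mul_add]; exact Submodule.add_mem _ hy hz
        | smul r y _ hy => rw [mul_smul_comm]; exact Submodule.smul_mem _ _ hy
      | zero => intro y hy; rw [zero_mul]; exact Submodule.zero_mem _
      | add x z _ _ hx hz => intro y hy; rw [add_mul]
                             exact Submodule.add_mem _ (hx y hy) (hz y hy)
      | smul r x _ hx => intro y hy; rw [smul_mul_assoc]
                         exact Submodule.smul_mem _ _ (hx y hy)
    exact key _ h1 _ (ih0 )

def HFam (e : κ → ℕ) : MvPolynomial κ ℝ :=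
  ∏ q : κ, Polynomial.aeval (MvPolynomial.X q) (He (e q))

lemma span_HFam (P : MvPolynomial κ ℝ) : P ∈ Submodule.span ℝ (Set.range (HFam (κ := κ))) := by
  have huniv : (HFam (κ := κ)) = HFamOn Finset.univ := rfl
  rw [MvPolynomial.as_sum P]
  refine Submodule.sum_mem _ fun d hd => ?_
  have hmon : MvPolynomial.monomial d (MvPolynomial.coeff d P)
      = (MvPolynomial.coeff d P) • ∏ q : κ, (MvPolynomial.X q : MvPolynomial κ ℝ) ^ d q := by
    rw [MvPolynomial.monomial_eq, Finsupp.prod_fintype _ _ (fun c => pow_zero _),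
      MvPolynomial.smul_eq_C_mul]
  rw [hmon, huniv]
  exact Submodule.smul_mem _ _ (mem_span_HFamOn Finset.univ (fun q => d q))

lemma exists_He_expansion (P : MvPolynomial κ ℝ) :
    ∃ c : (κ → ℕ) →₀ ℝ, (c.sum fun e a => a • HFam e) = P :=
  Finsupp.mem_span_range_iff_exists_finsupp.1 (span_HFam P)



lemma evalMvAeval {κ τ : Type*} (z : τ → ℝ) (f : κ → MvPolynomial τ ℝ) (P : MvPolynomial κ ℝ) :
    MvPolynomial.eval z (MvPolynomial.aeval f P)
      = MvPolynomial.eval (fun q => MvPolynomial.eval z (f q)) P := by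
  have h := MvPolynomial.aeval_bind₁ (R := ℝ) z f P
  rw [← MvPolynomial.aeval_eq_bind₁] at h
  have e1 : ∀ (p : MvPolynomial τ ℝ), MvPolynomial.eval z p = MvPolynomial.aeval z p :=
    fun p => rfl
  have e2 : ∀ (p : MvPolynomial κ ℝ) (w : κ → ℝ), MvPolynomial.eval w p = MvPolynomial.aeval w p :=
    fun p w => rfl
  rw [e1, e2, h]
  congr 1

lemma evalPolyAeval' {κ : Type*} (y : κ → ℝ) (L : MvPolynomial κ ℝ) (h : Polynomial ℝ) :
    MvPolynomial.eval y (Polynomial.aeval L h) = h.eval (MvPolynomial.eval y L) := by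
  rw [show MvPolynomial.eval y (Polynomial.aeval L h)
      = MvPolynomial.aeval y (Polynomial.aeval L h) from rfl,
    ← Polynomial.aeval_algHom_apply]
  simp [MvPolynomial.aeval_def]

section K
variable {κ : Type*} [Fintype κ]

/-- The integrand of the key pairing integral. -/
def Kfun (a b b' : ℝ) (e f : κ → ℕ) (x : Fin 3 → κ → ℝ) : ℝ :=
  (∏ q, (He (e q)).eval (a * x 0 q + b * x 2 q)) *
    ∏ q, (He (f q)).eval (a * x 1 q + b' * x 2 q)

lemma integrable_Kfun (a b b' : ℝ) (e f : κ → ℕ) :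
    Integrable (Kfun a b b' e f)
      (Measure.pi fun _ : Fin 3 => Measure.pi fun _ : κ => gauss) := by
  classical
  set Φ : MvPolynomial (Fin 3 × κ) ℝ :=
    (∏ q : κ, Polynomial.aeval (MvPolynomial.C a * MvPolynomial.X ((0 : Fin 3), q)
        + MvPolynomial.C b * MvPolynomial.X ((2 : Fin 3), q)) (He (e q))) *
    (∏ q : κ, Polynomial.aeval (MvPolynomial.C a * MvPolynomial.X ((1 : Fin 3), q)
        + MvPolynomial.C b' * MvPolynomial.X ((2 : Fin 3), q)) (He (f q))) with hΦ
  have heval : ∀ x : Fin 3 → κ → ℝ,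
      MvPolynomial.eval (fun c => x c.1 c.2) Φ = Kfun a b b' e f x := by
    intro x
    rw [hΦ, map_mul, map_prod, map_prod]
    unfold Kfun
    congr 1 <;> refine Finset.prod_congr rfl fun q _ => ?_ <;>
      rw [evalPolyAeval'] <;> simp
  refine (integrable_eval_nested Φ).congr (Filter.Eventually.of_forall fun x => heval x)

lemma K_eval (a b b' : ℝ) (ha : a ^ 2 + b ^ 2 = 1) (ha' : a ^ 2 + b' ^ 2 = 1) (e f : κ → ℕ) :
    ∫ x : Fin 3 → (κ → ℝ), Kfun a b b' e f x
        ∂(Measure.pi fun _ => Measure.pi fun _ : κ => gauss)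
      = if e = f then (∏ q, (Nat.factorial (e q) : ℝ)) * (b * b') ^ (∑ q, e q) else 0 := by
  classical
  have hpeel := integral_fin3 (Measure.pi fun _ : κ => gauss)
    (fun u u' v => (∏ q, (He (e q)).eval (a * u q + b * v q)) *
      ∏ q, (He (f q)).eval (a * u' q + b' * v q))
    (integrable_Kfun a b b' e f)
  beta_reduce at hpeel
  unfold Kfun
  rw [hpeel]
  -- inner integral over w : Fin 2 → (κ → ℝ)
  have hinner : ∀ v : κ → ℝ,
      ∫ w : Fin 2 → (κ → ℝ), (∏ q, (He (e q)).eval (a * w 0 q + b * v q)) *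
          ∏ q, (He (f q)).eval (a * w 1 q + b' * v q)
          ∂(Measure.pi fun _ => Measure.pi fun _ : κ => gauss)
        = (b ^ (∑ q, e q) * ∏ q, (He (e q)).eval (v q))
          * (b' ^ (∑ q, f q) * ∏ q, (He (f q)).eval (v q)) := by
    intro v
    have hsplit : (fun w : Fin 2 → (κ → ℝ) =>
        (∏ q, (He (e q)).eval (a * w 0 q + b * v q)) *
          ∏ q, (He (f q)).eval (a * w 1 q + b' * v q))
        = fun w : Fin 2 → (κ → ℝ) => ∏ i : Fin 2,
            (fun i (u : κ → ℝ) => if i = 0 then ∏ q, (He (e q)).eval (a * u q + b * v q)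
              else ∏ q, (He (f q)).eval (a * u q + b' * v q)) i (w i) := by
      funext w
      rw [Fin.prod_univ_two]
      norm_num
    rw [hsplit, integral_pi_prod_fin (Measure.pi fun _ : κ => gauss)
      (fun i (u : κ → ℝ) => if i = 0 then ∏ q, (He (e q)).eval (a * u q + b * v q)
        else ∏ q, (He (f q)).eval (a * u q + b' * v q)), Fin.prod_univ_two]
    norm_num
    congr 1
    · rw [integral_pi_prod (gauss) (fun q (t : ℝ) => (He (e q)).eval (a * t + b * v q))]
      rw [Finset.prod_congr rfl (fun q _ => integral_He_affine (e q) a b ha (v q))]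
      rw [Finset.prod_mul_distrib, Finset.prod_pow_eq_pow_sum]
    · rw [integral_pi_prod (gauss) (fun q (t : ℝ) => (He (f q)).eval (a * t + b' * v q))]
      rw [Finset.prod_congr rfl (fun q _ => integral_He_affine (f q) a b' ha' (v q))]
      rw [Finset.prod_mul_distrib, Finset.prod_pow_eq_pow_sum]
  rw [integral_congr_ae (Filter.Eventually.of_forall hinner)]
  -- outer integral over v
  have hout : (fun v : κ → ℝ => (b ^ (∑ q, e q) * ∏ q, (He (e q)).eval (v q))
        * (b' ^ (∑ q, f q) * ∏ q, (He (f q)).eval (v q)))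
      = fun v : κ → ℝ => (b ^ (∑ q, e q) * b' ^ (∑ q, f q)) *
          ∏ q, (fun q (t : ℝ) => (He (e q)).eval t * (He (f q)).eval t) q (v q) := by
    funext v
    rw [Finset.prod_mul_distrib]
    ring
  rw [hout, integral_const_mul,
    integral_pi_prod gauss (fun q (t : ℝ) => (He (e q)).eval t * (He (f q)).eval t)]
  rw [Finset.prod_congr rfl (fun q _ => integral_He_mul (e q) (f q))]
  by_cases hef : e = f
  · subst hef
    simp [mul_pow]
    try ring
  · have hex : ∃ q : κ, e q ≠ f q := by
      by_contra hq
      push_neg at hq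
      exact hef (funext hq)
    obtain ⟨q0, hq0⟩ := hex
    rw [if_neg hef]
    have hz : (∏ q : κ, if e q = f q then ((Nat.factorial (e q) : ℝ)) else 0) = 0 :=
      Finset.prod_eq_zero (Finset.mem_univ q0) (by rw [if_neg hq0])
    rw [hz, mul_zero]

end K

end
end Stmt14

/-- For correlated Gaussian Wigner matrices `W¹(ρ), W²(ρ)` with covariance
`Cov(W^m_{ij}, W^n_{kl}) = δ_{{i,j}={k,l}}(1+δ_{i=j})(ρ + (1−ρ)δ_{m=n})` and a
polynomial function `g`, the function `ghat(ρ) = E[g(W¹(ρ)) g(W²(ρ))]` is a polynomial in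
`ρ` all of whose derivatives at `ρ = 0` are non-negative; consequently `ghat` is convex on
`[0,1]` and `|ghat(−ρ) − ghat(0)| ≤ ghat(ρ) − ghat(0) ≤ ρ(ghat(1) − ghat(0))` for `ρ ∈ [0,1]`. -/
theorem stmt_14 (N : ℕ) (g : Matrix (Fin N) (Fin N) ℝ → ℝ)
    (hg : ∃ P : MvPolynomial (Fin N × Fin N) ℝ,
      ∀ A : Matrix (Fin N) (Fin N) ℝ, g A = MvPolynomial.eval (fun q => A q.1 q.2) P)
    (ghat : ℝ → ℝ)
    (hghat : ∀ ρ : ℝ, ghat ρ =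
      ∫ x : Fin 3 → (Fin N × Fin N → ℝ),
        g (WMat N 1 ρ (x 0) (x 2)) *
          g (WMat N (if 0 ≤ ρ then 1 else -1) ρ (x 1) (x 2))
        ∂(Measure.pi fun _ => stdGaussPi (Fin N × Fin N))) :
    ∃ Q : Polynomial ℝ,
      (∀ ρ ∈ Set.Icc (-1 : ℝ) 1, ghat ρ = Q.eval ρ) ∧
      (∀ k : ℕ, 1 ≤ k → 0 ≤ Q.coeff k) ∧
      ConvexOn ℝ (Set.Icc (0 : ℝ) 1) ghat ∧
      ∀ ρ ∈ Set.Icc (0 : ℝ) 1,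
        |ghat (-ρ) - ghat 0| ≤ ghat ρ - ghat 0 ∧ ghat ρ - ghat 0 ≤ ρ * (ghat 1 - ghat 0) := by
  classical
  obtain ⟨P, hP⟩ := hg
  set T : MvPolynomial (Fin N × Fin N) ℝ := MvPolynomial.aeval
    (fun q : Fin N × Fin N => MvPolynomial.C (if q.1 = q.2 then Real.sqrt 2 else 1) *
      MvPolynomial.X (if q.1 ≤ q.2 then q else (q.2, q.1))) P with hT
  obtain ⟨c, hc⟩ := Stmt14.exists_He_expansion T
  have hW : ∀ (t ρ : ℝ) (u v : (Fin N × Fin N) → ℝ),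
      g (WMat N t ρ u v) = MvPolynomial.eval
        (fun q => Real.sqrt (1 - |ρ|) * u q + (t * Real.sqrt |ρ|) * v q) T := by
    intro t ρ u v
    rw [hP, hT, Stmt14.evalMvAeval]
    refine congrArg (fun F : ((Fin N × Fin N) → ℝ) => (MvPolynomial.eval F) P)
      (funext fun q => ?_)
    simp only [map_mul, MvPolynomial.eval_C, MvPolynomial.eval_X]
    rcases q with ⟨i, j⟩
    show WMat N t ρ u v i j = _
    simp only [WMat]
  have hEval : ∀ z : (Fin N × Fin N) → ℝ, MvPolynomial.eval z T
      = ∑ e ∈ c.support, c e * ∏ q, (Stmt14.He (e q)).eval (z q) := by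
    intro z
    rw [← hc, Finsupp.sum, map_sum]
    refine Finset.sum_congr rfl fun e _ => ?_
    rw [MvPolynomial.smul_eq_C_mul, map_mul, MvPolynomial.eval_C]
    congr 1
    unfold Stmt14.HFam
    rw [map_prod]
    refine Finset.prod_congr rfl fun q _ => ?_
    rw [Stmt14.evalPolyAeval', MvPolynomial.eval_X]
  set Q : Polynomial ℝ := ∑ e ∈ c.support,
    Polynomial.C ((c e) ^ 2 * ∏ q, (Nat.factorial (e q) : ℝ)) * Polynomial.X ^ (∑ q, e q)
    with hQdef
  have hQcoeff : ∀ k : ℕ, 0 ≤ Q.coeff k := by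
    intro k
    rw [hQdef, Polynomial.finset_sum_coeff]
    refine Finset.sum_nonneg fun e _ => ?_
    rw [Polynomial.coeff_C_mul, Polynomial.coeff_X_pow]
    have h1 : (0:ℝ) ≤ (c e) ^ 2 * ∏ q, (Nat.factorial (e q) : ℝ) :=
      mul_nonneg (sq_nonneg _) (Finset.prod_nonneg fun q _ => by positivity)
    split_ifs <;> simp [h1]
  have hQeval : ∀ ρ : ℝ, Q.eval ρ
      = ∑ e ∈ c.support, ((c e) ^ 2 * ∏ q, (Nat.factorial (e q) : ℝ)) * ρ ^ (∑ q, e q) := by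
    intro ρ
    rw [hQdef, Polynomial.eval_finset_sum]
    refine Finset.sum_congr rfl fun e _ => ?_
    rw [Polynomial.eval_mul, Polynomial.eval_C, Polynomial.eval_pow, Polynomial.eval_X]
  -- main evaluation on [-1, 1]
  have hghatQ : ∀ ρ ∈ Set.Icc (-1 : ℝ) 1, ghat ρ = Q.eval ρ := by
    intro ρ hρ
    set s : ℝ := if 0 ≤ ρ then 1 else -1 with hs
    set a := Real.sqrt (1 - |ρ|) with hadef
    set b := Real.sqrt |ρ| with hbdef
    have habs : |ρ| ≤ 1 := abs_le.2 ⟨hρ.1, hρ.2⟩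
    have hab : a ^ 2 + b ^ 2 = 1 := by
      rw [hadef, hbdef, Real.sq_sqrt (by linarith : (0:ℝ) ≤ 1 - |ρ|),
        Real.sq_sqrt (abs_nonneg ρ)]
      ring
    have hs2 : s ^ 2 = 1 := by rw [hs]; split_ifs <;> norm_num
    have hab' : a ^ 2 + (s * b) ^ 2 = 1 := by rw [mul_pow, hs2, one_mul]; exact hab
    have hbb' : b * (s * b) = ρ := by
      rw [hbdef]
      rcases le_or_gt 0 ρ with h | h
      · rw [hs, if_pos h, one_mul, Real.mul_self_sqrt (abs_nonneg ρ), abs_of_nonneg h]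
      · rw [hs, if_neg (not_le.2 h),
          show Real.sqrt |ρ| * (-1 * Real.sqrt |ρ|) = -(Real.sqrt |ρ| * Real.sqrt |ρ|) by ring,
          Real.mul_self_sqrt (abs_nonneg ρ), abs_of_neg h, neg_neg]
    have hint_eq : ∀ x : Fin 3 → ((Fin N × Fin N) → ℝ),
        g (WMat N 1 ρ (x 0) (x 2)) * g (WMat N (if 0 ≤ ρ then 1 else -1) ρ (x 1) (x 2))
        = ∑ e ∈ c.support, ∑ f ∈ c.support, (c e * c f) * Stmt14.Kfun a b (s * b) e f x := by
      intro x
      rw [hW 1 ρ (x 0) (x 2), hW (if 0 ≤ ρ then 1 else -1) ρ (x 1) (x 2)]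
      rw [hEval, hEval, Finset.sum_mul_sum]
      refine Finset.sum_congr rfl fun e _ => Finset.sum_congr rfl fun f _ => ?_
      unfold Stmt14.Kfun
      simp only [← hadef, ← hbdef, ← hs, one_mul]
      ring
    rw [hghat ρ]
    rw [show (Measure.pi fun _ : Fin 3 => stdGaussPi (Fin N × Fin N))
      = (Measure.pi fun _ : Fin 3 => Measure.pi fun _ : Fin N × Fin N => Stmt14.gauss)
      from rfl]
    rw [integral_congr_ae (Filter.Eventually.of_forall hint_eq)]
    rw [integral_finset_sum _ (fun e _ => integrable_finset_sum _
      (fun f _ => (Stmt14.integrable_Kfun a b (s * b) e f).const_mul _))]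
    rw [Finset.sum_congr rfl (fun e (_ : e ∈ c.support) => integral_finset_sum _
      (fun f _ => (Stmt14.integrable_Kfun a b (s * b) e f).const_mul _))]
    rw [Finset.sum_congr rfl (fun e _ => Finset.sum_congr rfl (fun f _ => by
      rw [integral_const_mul, Stmt14.K_eval a b (s * b) hab hab' e f]))]
    rw [Finset.sum_congr rfl (fun e (he : e ∈ c.support) => Finset.sum_eq_single e
      (fun f _ hfe => by rw [if_neg (Ne.symm hfe), mul_zero])
      (fun hne => absurd he hne))]
    rw [hQeval]
    refine Finset.sum_congr rfl fun e _ => ?_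
    rw [if_pos rfl, hbb']
    ring
  -- convexity of Q.eval on [0,1]
  have hsub : Set.Icc (0:ℝ) 1 ⊆ Set.Icc (-1:ℝ) 1 := fun t ht => ⟨by linarith [ht.1], ht.2⟩
  have hconvS : ∀ sfin : Finset ℕ, ConvexOn ℝ (Set.Icc (0:ℝ) 1)
      (fun x : ℝ => ∑ k ∈ sfin, Q.coeff k * x ^ k) := by
    intro sfin
    induction sfin using Finset.induction_on with
    | empty => simpa using convexOn_const (0:ℝ) (convex_Icc (0:ℝ) 1)
    | insert _ _ hk =>
      rename_i k sfin' ih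
      have h1 : ConvexOn ℝ (Set.Icc (0:ℝ) 1) (fun x : ℝ => x ^ k) :=
        (convexOn_pow k).subset (fun t ht => ht.1) (convex_Icc 0 1)
      have h2 := h1.smul (hQcoeff k)
      have h3 : (fun x : ℝ => ∑ j ∈ insert k sfin', Q.coeff j * x ^ j)
          = fun x : ℝ => (Q.coeff k • fun y : ℝ => y ^ k) x
            + (fun y : ℝ => ∑ j ∈ sfin', Q.coeff j * y ^ j) x := by
        funext x
        rw [Finset.sum_insert hk]
        simp [smul_eq_mul]
      rw [h3]
      exact h2.add ih
  have hconvQ : ConvexOn ℝ (Set.Icc (0:ℝ) 1) (fun x : ℝ => Q.eval x) := by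
    have h := hconvS (Finset.range (Q.natDegree + 1))
    have hfun : (fun x : ℝ => ∑ k ∈ Finset.range (Q.natDegree + 1), Q.coeff k * x ^ k)
        = fun x : ℝ => Q.eval x := by
      funext x
      rw [Polynomial.eval_eq_sum_range]
    rwa [hfun] at h
  -- difference formula
  have h0mem : (0:ℝ) ∈ Set.Icc (-1:ℝ) 1 := by norm_num
  have h1mem : (1:ℝ) ∈ Set.Icc (-1:ℝ) 1 := by norm_num
  have hdiff : ∀ ρ ∈ Set.Icc (-1:ℝ) 1, ghat ρ - ghat 0
      = ∑ k ∈ (Finset.range (Q.natDegree + 1)).erase 0, Q.coeff k * ρ ^ k := by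
    intro ρ hρ
    rw [hghatQ ρ hρ, hghatQ 0 h0mem, Polynomial.eval_eq_sum_range,
      Polynomial.eval_eq_sum_range]
    have hzero_sum : ∑ k ∈ Finset.range (Q.natDegree + 1), Q.coeff k * (0:ℝ) ^ k
        = Q.coeff 0 := by
      rw [Finset.sum_eq_single 0]
      · simp
      · intro k _ hk; simp [zero_pow hk]
      · intro h; exact absurd (Finset.mem_range.2 (Nat.succ_pos _)) h
    rw [hzero_sum, ← Finset.add_sum_erase _ _ (Finset.mem_range.2 (Nat.succ_pos Q.natDegree))]
    simp
  refine ⟨Q, hghatQ, fun k _ => hQcoeff k, ?_, ?_⟩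
  · refine ⟨convex_Icc _ _, fun x hx y hy α β hα hβ hαβ => ?_⟩
    have hmem : α • x + β • y ∈ Set.Icc (0:ℝ) 1 := (convex_Icc (0:ℝ) 1) hx hy hα hβ hαβ
    rw [hghatQ _ (hsub hmem), hghatQ _ (hsub hx), hghatQ _ (hsub hy)]
    exact hconvQ.2 hx hy hα hβ hαβ
  · intro ρ hρ
    have hρIcc : ρ ∈ Set.Icc (-1:ℝ) 1 := hsub hρ
    have hnegIcc : -ρ ∈ Set.Icc (-1:ℝ) 1 := ⟨by linarith [hρ.2], by linarith [hρ.1]⟩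
    constructor
    · rw [hdiff (-ρ) hnegIcc, hdiff ρ hρIcc]
      refine (Finset.abs_sum_le_sum_abs _ _).trans ?_
      refine Finset.sum_le_sum fun k _ => ?_
      rw [abs_mul, abs_of_nonneg (hQcoeff k), abs_pow, abs_neg, abs_of_nonneg hρ.1]
    · rw [hdiff ρ hρIcc, hdiff 1 h1mem, Finset.mul_sum]
      refine Finset.sum_le_sum fun k hk => ?_
      rw [one_pow]
      have hk0 : k ≠ 0 := Finset.ne_of_mem_erase hk
      have hle : ρ ^ k ≤ ρ := pow_le_of_le_one hρ.1 hρ.2 hk0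
      calc Q.coeff k * ρ ^ k ≤ Q.coeff k * ρ :=
            mul_le_mul_of_nonneg_left hle (hQcoeff k)
        _ = ρ * (Q.coeff k * 1) := by ring
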